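/- Let (X,d) be a suprametric space with constant ρ > 0 and let (x_k) be a sequence in X such that the series ∑_{k=0}^∞ d(x_k, x_{k+1}) converges. Then for all n and p ≥ 1, d(x_n, x_{n+p}) ≤ (exp(ρ·R_n) − 1)/ρ, where R_n = ∑_{k=n}^∞ d(x_k, x_{k+1}). In particular (x_k) is a Cauchy sequence with respect to d. -/

import Mathlib

open Filter Topology

structure IsSuprametric {X : Type*} (d : X → X → ℝ) (ρ : ℝ) : Prop where
  nonneg : ∀ x y, 0 ≤ d x y
  eq_zero_iff : ∀ x y, d x y = 0 ↔ x = y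
  symm : ∀ x y, d x y = d y x
  triangle : ∀ x y z, d x y ≤ d x z + d z y + ρ * d x z * d z y

def IsCauchySeq {X : Type*} (d : X → X → ℝ) (x : ℕ → X) : Prop :=
  ∀ ε > 0, ∃ N, ∀ m ≥ N, ∀ n ≥ N, d (x m) (x n) < ε

def ConvergesTo {X : Type*} (d : X → X → ℝ) (x : ℕ → X) (z : X) : Prop :=
  Tendsto (fun n => d (x n) z) atTop (𝓝 0)

def IsCompleteSupra {X : Type*} (d : X → X → ℝ) : Prop :=
  ∀ x : ℕ → X, IsCauchySeq d x → ∃ z, ConvergesTo d x z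

theorem stmt2 {X : Type*} (d : X → X → ℝ) (ρ : ℝ) (hρ : 0 < ρ)
    (hd : IsSuprametric d ρ) (x : ℕ → X)
    (hsum : Summable fun k => d (x k) (x (k + 1))) :
    (∀ n p : ℕ, 1 ≤ p →
      d (x n) (x (n + p)) ≤
        (Real.exp (ρ * ∑' k : ℕ, d (x (n + k)) (x (n + k + 1))) - 1) / ρ)
    ∧ IsCauchySeq d x := by
  set g : ℕ → ℝ := fun k => d (x k) (x (k + 1)) with hg
  have hgnn : ∀ k, 0 ≤ g k := fun k => hd.nonneg _ _
  have hsum' : ∀ n, Summable fun k => g (n + k) := by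
    intro n
    have := (summable_nat_add_iff (f := g) n).mpr hsum
    exact this.congr (fun k => by simp [add_comm])
  set R : ℕ → ℝ := fun n => ∑' k, g (n + k) with hR
  have hRnn : ∀ n, 0 ≤ R n := fun n => tsum_nonneg (fun k => hgnn _)
  have hRsplit : ∀ n, R n = g n + R (n + 1) := by
    intro n
    have h0 := Summable.tsum_eq_zero_add (f := fun k => g (n + k)) (hsum' n)
    calc R n = g (n + 0) + ∑' k, g (n + (k + 1)) := h0
      _ = g n + R (n + 1) := by
          rw [add_zero]
          congr 1
          exact tsum_congr fun k => by congr 1; omega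
  have hgle : ∀ n, g n ≤ R n := by
    intro n
    rw [hRsplit n]
    simpa using hRnn (n + 1)
  -- key: ∀ p ≥ 1, ∀ n, 1 + ρ * d (x n) (x (n+p)) ≤ exp (ρ * R n)
  have key : ∀ p : ℕ, 1 ≤ p → ∀ n, 1 + ρ * d (x n) (x (n + p)) ≤ Real.exp (ρ * R n) := by
    intro p
    induction p with
    | zero => omega
    | succ p ih =>
      intro _ n
      rcases Nat.eq_zero_or_pos p with rfl | hp
      · have h1 : d (x n) (x (n + 1)) ≤ R n := hgle n
        have h2 := Real.add_one_le_exp (ρ * R n)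
        nlinarith
      · have tri := hd.triangle (x n) (x (n + (p + 1))) (x (n + 1))
        have ihp := ih hp (n + 1)
        have hrw : n + 1 + p = n + (p + 1) := by omega
        rw [hrw] at ihp
        have hd1 : 0 ≤ d (x n) (x (n + 1)) := hd.nonneg _ _
        have hd2 : 0 ≤ d (x (n + 1)) (x (n + (p + 1))) := hd.nonneg _ _
        have step : 1 + ρ * d (x n) (x (n + (p + 1))) ≤
            (1 + ρ * d (x n) (x (n + 1))) * (1 + ρ * d (x (n + 1)) (x (n + (p + 1)))) := by
          nlinarith [tri]
        have h1 : (1 : ℝ) + ρ * d (x n) (x (n + 1)) ≤ Real.exp (ρ * g n) := by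
          have := Real.add_one_le_exp (ρ * g n)
          simp only [hg]; linarith
        have h2 : (0:ℝ) < 1 + ρ * d (x (n + 1)) (x (n + (p + 1))) := by nlinarith
        have h1' : (0:ℝ) ≤ 1 + ρ * d (x n) (x (n + 1)) := by nlinarith
        calc 1 + ρ * d (x n) (x (n + (p + 1)))
            ≤ (1 + ρ * d (x n) (x (n + 1))) * (1 + ρ * d (x (n + 1)) (x (n + (p + 1)))) := step
          _ ≤ Real.exp (ρ * g n) * Real.exp (ρ * R (n + 1)) :=
              mul_le_mul h1 ihp h2.le (Real.exp_pos _).le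
          _ = Real.exp (ρ * R n) := by rw [← Real.exp_add, hRsplit n]; ring_nf
  have bound : ∀ n p : ℕ, 1 ≤ p →
      d (x n) (x (n + p)) ≤ (Real.exp (ρ * R n) - 1) / ρ := by
    intro n p hp
    rw [le_div_iff₀ hρ]
    have := key p hp n
    linarith
  refine ⟨fun n p hp => bound n p hp, ?_⟩
  -- Cauchy
  intro ε hε
  have hRt : Tendsto R atTop (𝓝 0) := by
    have := tendsto_sum_nat_add g
    exact this.congr (fun n => tsum_congr (fun k => by simp [add_comm]))
  have hft : Tendsto (fun n => (Real.exp (ρ * R n) - 1) / ρ) atTop (𝓝 0) := by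
    have hc : Continuous (fun t : ℝ => (Real.exp (ρ * t) - 1) / ρ) :=
      ((Real.continuous_exp.comp (continuous_const.mul continuous_id)).sub
        continuous_const).div_const ρ
    have := (hc.tendsto 0).comp hRt
    simpa [Function.comp_def] using this
  obtain ⟨N, hN⟩ := (hft.eventually (eventually_lt_nhds hε)).exists_forall_of_atTop
  refine ⟨N, fun m hm n hn => ?_⟩
  rcases lt_trichotomy m n with h | rfl | h
  · have : d (x m) (x n) ≤ (Real.exp (ρ * R m) - 1) / ρ := by
      have := bound m (n - m) (by omega)
      rwa [show m + (n - m) = n by omega] at this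
    exact this.trans_lt (hN m hm)
  · have : d (x m) (x m) = 0 := (hd.eq_zero_iff _ _).mpr rfl
    linarith
  · rw [hd.symm]
    have : d (x n) (x m) ≤ (Real.exp (ρ * R n) - 1) / ρ := by
      have := bound n (m - n) (by omega)
      rwa [show n + (m - n) = m by omega] at this
    exact this.trans_lt (hN n hn)
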